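/- Let T = wT_φ on C(K) with φ a non-surjective homeomorphism of K into itself, L = ⋂_{n≥0} φⁿ(K), M = K \ Int_K(L). Then σ(T, C(M)) is either the closed disk of radius ρ(T, C(M)) centered at 0, or the singleton {0}. -/

import Mathlib

open Filter Topology

open Function

-- aux A: 0 is in the spectrum of a weighted composition operator with
-- non-surjective (hence proper closed range) injection symbol
lemma wco_zero_mem {X : Type*} [TopologicalSpace X] [CompactSpace X] [T2Space X]
    (ψ : X → X) (hψc : Continuous ψ) (hns : ¬ Function.Surjective ψ)
    (v : X → ℂ) (T : C(X, ℂ) →L[ℂ] C(X, ℂ))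
    (hT : ∀ f x, T f x = v x * f (ψ x)) :
    (0 : ℂ) ∈ spectrum ℂ T := by
  rw [spectrum.mem_iff]
  intro h
  obtain ⟨u, hu⟩ := h
  have hcl : IsClosed (Set.range ψ) := (isCompact_range hψc).isClosed
  obtain ⟨x₀, hx₀⟩ : ∃ x₀ : X, x₀ ∉ Set.range ψ := by
    by_contra hc
    push_neg at hc
    exact hns fun x => hc x
  obtain ⟨g, hg0, hg1, hg01⟩ := exists_continuous_zero_one_of_isClosed hcl
    isClosed_singleton (Set.disjoint_singleton_right.mpr hx₀)
  set f : C(X, ℂ) := ⟨fun x => ((g x : ℝ) : ℂ), Complex.continuous_ofReal.comp g.continuous⟩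
    with hf
  have hTf : T f = 0 := by
    ext x
    have : g (ψ x) = 0 := hg0 ⟨x, rfl⟩
    simp [hT, hf, this]
  have hVA : (↑u⁻¹ : C(X, ℂ) →L[ℂ] C(X, ℂ)) * ↑u = 1 := u.inv_mul
  have : f = 0 := by
    have h1 : (↑u : C(X, ℂ) →L[ℂ] C(X, ℂ)) f = 0 := by
      rw [hu]
      have : (algebraMap ℂ (C(X, ℂ) →L[ℂ] C(X, ℂ)) 0 - T) f = - (T f) := by
        simp
      rw [this, hTf, neg_zero]
    have := congrArg (fun q => (↑u⁻¹ : C(X, ℂ) →L[ℂ] C(X, ℂ)) q) h1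
    simpa [← ContinuousLinearMap.mul_apply, hVA] using this
  have : f x₀ = 0 := by rw [this]; rfl
  have h1 : f x₀ = 1 := by
    have := hg1 (Set.mem_singleton x₀)
    simp [hf, this]
  rw [this] at h1
  exact zero_ne_one h1

private lemma wco_telescope {E : Type*} [NormedAddCommGroup E] [NormedSpace ℂ E]
    (T : E →L[ℂ] E) (z : ℂ) (hz : z ≠ 0) (p : ℕ) (f : E) (hf : (T ^ p) f = 0) :
    z • (∑ i ∈ Finset.range p, (z⁻¹ ^ (i + 1)) • (T ^ i) f)
      - T (∑ i ∈ Finset.range p, (z⁻¹ ^ (i + 1)) • (T ^ i) f) = f := by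
  have expand : z • (∑ i ∈ Finset.range p, (z⁻¹ ^ (i + 1)) • (T ^ i) f)
      - T (∑ i ∈ Finset.range p, (z⁻¹ ^ (i + 1)) • (T ^ i) f) =
      ∑ i ∈ Finset.range p,
        ((z⁻¹ ^ i) • (T ^ i) f - (z⁻¹ ^ (i + 1)) • (T ^ (i + 1)) f) := by
    rw [Finset.smul_sum, map_sum, ← Finset.sum_sub_distrib]
    apply Finset.sum_congr rfl
    intro i _
    congr 1
    · rw [smul_smul]
      congr 1
      rw [pow_succ]
      field_simp
    · rw [ContinuousLinearMap.map_smul]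
      congr 1
      rw [pow_succ', ContinuousLinearMap.mul_apply]
  rw [expand]
  rw [Finset.sum_range_sub' (fun i => (z⁻¹ ^ i) • (T ^ i) f) p]
  rw [hf, smul_zero, sub_zero, pow_zero, one_smul, pow_zero, ContinuousLinearMap.one_apply]

set_option maxHeartbeats 1600000 in
lemma wco_core {X : Type*} [TopologicalSpace X] [CompactSpace X] [T2Space X]
    (ψ : X → X) (hψc : Continuous ψ) (hψi : Function.Injective ψ)
    (v : X → ℂ) (hv : Continuous v)
    (T : C(X, ℂ) →L[ℂ] C(X, ℂ)) (hT : ∀ f x, T f x = v x * f (ψ x))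
    (hdepth : ∀ U : Set X, IsOpen U → U.Nonempty → ∃ x ∈ U, ∃ m : ℕ, ∀ y, ψ^[m] y ≠ x)
    (z : ℂ) (hz : z ≠ 0) (hzρ : (‖z‖₊ : ENNReal) < spectralRadius ℂ T) :
    z ∈ spectrum ℂ T := by
  classical
  by_contra hmem
  rw [spectrum.notMem_iff] at hmem
  obtain ⟨u, hu⟩ := hmem
  set V : C(X, ℂ) →L[ℂ] C(X, ℂ) := ↑u⁻¹ with hV
  set B : ℝ := ‖V‖ with hBdef
  have hB : 0 ≤ B := norm_nonneg _
  set r : ℝ := ‖z‖ with hrdef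
  have hr : 0 < r := by simpa [hrdef] using norm_pos_iff.mpr hz
  -- weight products
  set W : ℕ → X → ℂ := fun n x => ∏ i ∈ Finset.range n, v (ψ^[i] x) with hW
  have hWc : ∀ n, Continuous (W n) := by
    intro n
    apply continuous_finset_prod
    intro i _
    exact hv.comp (hψc.iterate i)
  -- power formula
  have hpow : ∀ (n : ℕ) (f : C(X, ℂ)) (x : X), (T ^ n) f x = W n x * f (ψ^[n] x) := by
    intro n
    induction n with
    | zero => intro f x; simp [hW, ContinuousLinearMap.one_apply]
    | succ n ih =>
      intro f x
      rw [pow_succ, ContinuousLinearMap.mul_apply, ih (T f) x, hT f (ψ^[n] x)]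
      rw [hW]
      simp only []
      rw [Finset.prod_range_succ, iterate_succ_apply']
      ring
  -- spectral radius lower bounds on norms of powers
  have hρ_pow : ∀ N : ℕ, 1 ≤ N → spectralRadius ℂ T ^ N ≤ (‖T ^ N‖₊ : ENNReal) := by
    intro N hN
    obtain ⟨n, rfl⟩ : ∃ n, N = n + 1 := ⟨N - 1, by omega⟩
    have h1 := spectrum.spectralRadius_le_pow_nnnorm_pow_one_div ℂ T n
    have hone : (‖(1 : C(X, ℂ) →L[ℂ] C(X, ℂ))‖₊ : ENNReal) ≤ 1 := by
      rw [show (1 : C(X, ℂ) →L[ℂ] C(X, ℂ)) = ContinuousLinearMap.id ℂ C(X, ℂ) from rfl]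
      exact_mod_cast ContinuousLinearMap.norm_id_le
    have h2 : (‖(1 : C(X, ℂ) →L[ℂ] C(X, ℂ))‖₊ : ENNReal) ^ (1 / (n + 1) : ℝ) ≤ 1 :=
      ENNReal.rpow_le_one hone (by positivity)
    have h3 : spectralRadius ℂ T ≤ (‖T ^ (n + 1)‖₊ : ENNReal) ^ (1 / (n + 1) : ℝ) := by
      calc spectralRadius ℂ T ≤ _ := h1
        _ ≤ (‖T ^ (n + 1)‖₊ : ENNReal) ^ (1 / (n + 1) : ℝ) * 1 := by
            exact mul_le_mul_right h2 _
        _ = _ := mul_one _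
    calc spectralRadius ℂ T ^ (n + 1)
        = spectralRadius ℂ T ^ (((n + 1 : ℕ)) : ℝ) := (ENNReal.rpow_natCast _ _).symm
      _ ≤ ((‖T ^ (n + 1)‖₊ : ENNReal) ^ (1 / (n + 1) : ℝ)) ^ (((n + 1 : ℕ)) : ℝ) :=
          ENNReal.rpow_le_rpow h3 (by positivity)
      _ = (‖T ^ (n + 1)‖₊ : ENNReal) ^ ((1 / (n + 1) : ℝ) * ((n + 1 : ℕ) : ℝ)) := by
          rw [← ENNReal.rpow_mul]
      _ = (‖T ^ (n + 1)‖₊ : ENNReal) ^ (1 : ℝ) := by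
          congr 1
          push_cast
          field_simp
      _ = _ := ENNReal.rpow_one _
  have hρfin : spectralRadius ℂ T ≠ ⊤ := by
    have := hρ_pow 1 le_rfl
    rw [pow_one, pow_one] at this
    exact ne_top_of_le_ne_top ENNReal.coe_ne_top this
  set S : ℝ := (spectralRadius ℂ T).toReal with hSdef
  have hrS : r < S := by
    have := (ENNReal.toReal_lt_toReal ENNReal.coe_ne_top hρfin).mpr hzρ
    simpa [hrdef, hSdef] using this
  have hSn : ∀ N : ℕ, 1 ≤ N → S ^ N ≤ ‖T ^ N‖ := by
    intro N hN
    have h := hρ_pow N hN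
    have := ENNReal.toReal_mono ENNReal.coe_ne_top h
    rw [ENNReal.toReal_pow, ENNReal.coe_toReal, coe_nnnorm] at this
    exact this
  -- pick N with C * r^N < S^N
  set C : ℝ := (B + 1) * r with hCdef
  have hC : 0 < C := by positivity
  obtain ⟨N₀, hN₀⟩ := pow_unbounded_of_one_lt (R := ℝ) C ((one_lt_div hr).2 hrS)
  set N : ℕ := N₀ + 1 with hNdef
  have hCN : C < (S / r) ^ N := by
    calc C < (S / r) ^ N₀ := hN₀
      _ ≤ (S / r) ^ N := by
        apply pow_le_pow_right₀ (le_of_lt ((one_lt_div hr).2 hrS))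
        omega
  have hCrS : C * r ^ N < S ^ N := by
    have := mul_lt_mul_of_pos_right hCN (pow_pos hr N)
    rwa [div_pow, div_mul_cancel₀] at this
    positivity
  -- find a point with large weight product
  have hex : ∃ x : X, C * r ^ N < ‖W N x‖ := by
    by_contra hcon
    push_neg at hcon
    have hle : ‖T ^ N‖ ≤ C * r ^ N := by
      apply ContinuousLinearMap.opNorm_le_bound _ (by positivity)
      intro f
      rw [ContinuousMap.norm_le _ (by positivity)]
      intro x
      rw [hpow N f x, norm_mul]
      calc ‖W N x‖ * ‖f (ψ^[N] x)‖ ≤ (C * r ^ N) * ‖f‖ := by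
            apply mul_le_mul (hcon x) (ContinuousMap.norm_coe_le_norm f _) (norm_nonneg _)
            positivity
        _ = _ := rfl
    have := hSn N (by omega)
    linarith
  obtain ⟨x₁, hx₁⟩ := hex
  -- use the depth hypothesis on the open set of large weight product
  set U : Set X := {x | C * r ^ N < ‖W N x‖} with hUdef
  have hUo : IsOpen U := isOpen_lt continuous_const ((hWc N).norm)
  obtain ⟨x', hx'U, m, hm⟩ := hdepth U hUo ⟨x₁, hx₁⟩
  -- backward chain from x'
  have hexP : ∃ j, ¬ ∃ y, ψ^[j] y = x' := ⟨m, fun ⟨y, hy⟩ => hm y hy⟩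
  set s : ℕ := Nat.find hexP with hsdef
  have hs : ¬ ∃ y, ψ^[s] y = x' := Nat.find_spec hexP
  have hsle : ∀ j, ¬ (∃ y, ψ^[j] y = x') → s ≤ j := fun j hj => Nat.find_min' hexP hj
  clear_value s
  have hs0 : s ≠ 0 := by
    intro h
    exact hs ⟨x', by rw [h, iterate_zero_apply]⟩
  set e : ℕ := s - 1 with hedef
  have hes : e + 1 = s := by omega
  have hPe : ∃ y, ψ^[e] y = x' := by
    by_contra he
    have := hsle e he
    omega
  obtain ⟨x₀, hx₀e⟩ := hPe
  have hx₀ : ∀ y, ψ y ≠ x₀ := by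
    intro y hy
    exact hs ⟨y, by rw [← hes, iterate_succ_apply, hy, hx₀e]⟩
  -- the orbit
  set xj : ℕ → X := fun j => ψ^[j] x₀ with hxj
  have hxe : xj e = x' := hx₀e
  have hdist : ∀ i j, i < j → xj i ≠ xj j := by
    intro i j hij heq
    apply hx₀ (ψ^[j - i - 1] x₀)
    have h1 : ψ^[i] (ψ^[j - i] x₀) = ψ^[i] x₀ := by
      rw [← Function.iterate_add_apply, show i + (j - i) = j by omega]
      exact heq.symm
    have h2 : ψ^[j - i] x₀ = x₀ := (hψi.iterate i) h1
    rw [show j - i = (j - i - 1) + 1 by omega, iterate_succ_apply'] at h2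
    exact h2
  set p : ℕ := e + N + 1 with hpdef
  set t : X := xj (e + N) with ht
  -- the bad set to avoid
  set D2 : Finset X := (Finset.range p).filter (· ≠ N) |>.image (fun i => xj (e + i)) with hD2
  set D : Set X := Set.range (ψ^[p]) ∪ ↑D2 with hD
  have hDc : IsClosed D :=
    IsClosed.union (isCompact_range (hψc.iterate p)).isClosed (D2.finite_toSet.isClosed)
  have htD : t ∉ D := by
    rintro (⟨y, hy⟩ | htD2)
    · have hy' : ψ^[e + N] (ψ y) = ψ^[e + N] x₀ := by
        have h0 : ψ^[e + N + 1] y = ψ^[e + N] x₀ := hy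
        calc ψ^[e + N] (ψ y) = ψ^[e + N + 1] y := (iterate_succ_apply ψ (e + N) y).symm
          _ = ψ^[e + N] x₀ := h0
      exact hx₀ y ((hψi.iterate (e + N)) hy')
    · simp only [hD2, Finset.coe_image, Set.mem_image, Finset.mem_coe, Finset.mem_filter,
        Finset.mem_range] at htD2
      obtain ⟨i, ⟨hip, hiN⟩, heq⟩ := htD2
      rcases lt_or_gt_of_ne hiN with h | h
      · exact hdist (e + i) (e + N) (by omega) heq
      · exact hdist (e + N) (e + i) (by omega) heq.symm
  obtain ⟨g, hg0, hg1, hg01⟩ := exists_continuous_zero_one_of_isClosed hDc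
    isClosed_singleton (Set.disjoint_singleton_right.mpr htD)
  set f : C(X, ℂ) := ⟨fun x => ((g x : ℝ) : ℂ), Complex.continuous_ofReal.comp g.continuous⟩
    with hf
  have hft : f t = 1 := by
    have := hg1 (Set.mem_singleton t)
    simp only [hf, ContinuousMap.coe_mk]
    rw [show g t = 1 from this]
    norm_num
  have hfD : ∀ x ∈ D, f x = 0 := by
    intro x hx
    have := hg0 hx
    simp only [hf, ContinuousMap.coe_mk]
    rw [show g x = 0 from this]
    norm_num
  have hfnorm : ‖f‖ ≤ 1 := by
    rw [ContinuousMap.norm_le _ zero_le_one]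
    intro x
    have := hg01 x
    simp only [hf, ContinuousMap.coe_mk, Complex.norm_real, Real.norm_eq_abs]
    exact abs_le.mpr ⟨by linarith [this.1], by linarith [this.2]⟩
  have hTpf : (T ^ p) f = 0 := by
    ext x
    rw [hpow p f x, hfD (ψ^[p] x) (Or.inl ⟨x, rfl⟩), mul_zero]
    rfl
  -- the preimage function
  set g₀ : C(X, ℂ) := ∑ i ∈ Finset.range p, (z⁻¹ ^ (i + 1)) • (T ^ i) f with hg₀
  have hAg₀ : z • g₀ - T g₀ = f := by
    rw [hg₀]
    exact wco_telescope T z hz p f hTpf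
  have hVf : V f = g₀ := by
    have hVA : V * (algebraMap ℂ (C(X, ℂ) →L[ℂ] C(X, ℂ)) z - T) = 1 := by
      rw [hV, ← hu]
      exact u.inv_mul
    have hA : (algebraMap ℂ (C(X, ℂ) →L[ℂ] C(X, ℂ)) z - T) g₀ = f := by
      rw [ContinuousLinearMap.sub_apply, Algebra.algebraMap_eq_smul_one,
        ContinuousLinearMap.smul_apply, ContinuousLinearMap.one_apply]
      exact hAg₀
    calc V f = V ((algebraMap ℂ (C(X, ℂ) →L[ℂ] C(X, ℂ)) z - T) g₀) := by rw [hA]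
      _ = (V * (algebraMap ℂ (C(X, ℂ) →L[ℂ] C(X, ℂ)) z - T)) g₀ := rfl
      _ = g₀ := by rw [hVA]; rfl
  -- evaluate g₀ at xj e = x'
  have heval : g₀ (xj e) = z⁻¹ ^ (N + 1) * (W N (xj e) * f t) := by
    have hsum : g₀ (xj e) = ∑ i ∈ Finset.range p, z⁻¹ ^ (i + 1) * ((T ^ i) f (xj e)) := by
      rw [hg₀]
      rw [ContinuousMap.coe_sum, Finset.sum_apply]
      apply Finset.sum_congr rfl
      intro i _
      simp [smul_eq_mul]
    rw [hsum]
    have hterm : ∀ i, (T ^ i) f (xj e) = W i (xj e) * f (xj (e + i)) := by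
      intro i
      rw [hpow i f (xj e)]
      congr 2
      show ψ^[i] (ψ^[e] x₀) = ψ^[e + i] x₀
      rw [← Function.iterate_add_apply, Nat.add_comm]
    rw [Finset.sum_eq_single N]
    · rw [hterm N]
    · intro i hi hiN
      rw [hterm i]
      have hz0 : f (xj (e + i)) = 0 := by
        apply hfD
        right
        simp only [hD2, Finset.coe_image, Set.mem_image, Finset.mem_coe, Finset.mem_filter,
          Finset.mem_range]
        exact ⟨i, ⟨Finset.mem_range.mp hi, hiN⟩, rfl⟩
      rw [hz0]
      ring
    · intro hN'
      exact absurd (Finset.mem_range.mpr (by omega : N < p)) hN'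
  have hWx' : C * r ^ N < ‖W N (xj e)‖ := by
    have hxe' : xj e = x' := hx₀e
    rw [hxe']
    exact hx'U
  have hub : ‖g₀ (xj e)‖ ≤ B := by
    rw [← hVf]
    calc ‖(V f) (xj e)‖ ≤ ‖V f‖ := ContinuousMap.norm_coe_le_norm _ _
      _ ≤ ‖V‖ * ‖f‖ := V.le_opNorm f
      _ ≤ B * 1 := by
          apply mul_le_mul_of_nonneg_left hfnorm (norm_nonneg _)
      _ = B := mul_one B
  have hlb : B + 1 < ‖g₀ (xj e)‖ := by
    rw [heval, hft, mul_one, norm_mul, norm_pow, norm_inv]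
    have h1 : r⁻¹ ^ (N + 1) * (C * r ^ N) < r⁻¹ ^ (N + 1) * ‖W N (xj e)‖ :=
      mul_lt_mul_of_pos_left hWx' (by positivity)
    calc B + 1 = r⁻¹ ^ (N + 1) * (C * r ^ N) := by
          rw [hCdef]
          have hrne : r ≠ 0 := ne_of_gt hr
          field_simp
          rw [one_div, inv_pow, pow_succ, mul_comm (r ^ N) r, mul_inv, ← mul_assoc, mul_inv_cancel₀ hrne, one_mul, inv_mul_cancel₀ (pow_ne_zero N hrne)]
      _ < _ := h1
  linarith

/-- `σ(T, C(M))` is either the closed disk of radius `ρ(T, C(M))` centered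
at `0`, or the singleton `{0}`. -/
theorem stmt3 (K : Type*) [TopologicalSpace K] [CompactSpace K] [T2Space K]
    (φ : K → K) (hφc : Continuous φ) (hφi : Function.Injective φ)
    (hns : Set.range φ ≠ Set.univ)
    (w : C(K, ℂ)) (T : C(K, ℂ) →L[ℂ] C(K, ℂ))
    (hT : ∀ (f : C(K, ℂ)) (k : K), T f k = w k * f (φ k))
    (L M : Set K) [CompactSpace M]
    (hL : L = ⋂ n : ℕ, φ^[n] '' Set.univ)
    (hM : M = (interior L)ᶜ)
    (hφM : ∀ k ∈ M, φ k ∈ M)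
    (TM : C(M, ℂ) →L[ℂ] C(M, ℂ))
    (hTM : ∀ (f : C(M, ℂ)) (k : M), TM f k = w k.1 * f ⟨φ k.1, hφM k.1 k.2⟩) :
    spectrum ℂ TM = {z : ℂ | (‖z‖₊ : ENNReal) ≤ spectralRadius ℂ TM} ∨
      spectrum ℂ TM = {0} := by
  classical
  -- M is nonempty
  have hMne : M.Nonempty := by
    rw [Set.nonempty_iff_ne_empty]
    intro hemp
    have h1 : interior L = Set.univ := by
      have := congrArg compl hemp
      rwa [hM, compl_compl, Set.compl_empty] at this
    have h2 : L = Set.univ := Set.eq_univ_of_univ_subset (h1 ▸ interior_subset)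
    have h3 : Set.univ ⊆ φ^[1] '' Set.univ := by
      have h4 : L ⊆ φ^[1] '' Set.univ := by
        rw [hL]
        exact Set.iInter_subset _ 1
      rw [h2] at h4
      exact h4
    apply hns
    apply Set.eq_univ_of_univ_subset
    intro k hk
    obtain ⟨y, -, hy⟩ := h3 hk
    exact ⟨y, by simpa using hy⟩
  -- key topological fact: no nonempty relatively open subset of M is inside L
  have hKey : ∀ U : Set K, IsOpen U → U ∩ M ⊆ L → U ∩ M = ∅ := by
    intro U hU hUL
    rw [Set.eq_empty_iff_forall_notMem]
    rintro x ⟨hxU, hxM⟩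
    have hUsub : U ⊆ L := by
      intro u hu
      by_cases hu' : u ∈ interior L
      · exact interior_subset hu'
      · exact hUL ⟨hu, by rw [hM]; exact hu'⟩
    have : U ⊆ interior L := interior_maximal hUsub hU
    have hxint : x ∈ interior L := this hxU
    rw [hM] at hxM
    exact hxM hxint
  -- the restricted map
  set Φ : M → M := fun x => ⟨φ x.1, hφM x.1 x.2⟩ with hΦ
  have hΦc : Continuous Φ := Continuous.subtype_mk (hφc.comp continuous_subtype_val) _
  have hΦi : Function.Injective Φ := by
    intro a b h
    have := congrArg Subtype.val h
    exact Subtype.ext (hφi this)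
  have hcoe : ∀ (n : ℕ) (x : M), ((Φ^[n] x : M) : K) = φ^[n] (x : K) := by
    intro n
    induction n with
    | zero => intro x; simp
    | succ n ih =>
      intro x
      rw [iterate_succ_apply', iterate_succ_apply']
      show φ ((Φ^[n] x : M) : K) = φ (φ^[n] (x : K))
      rw [ih x]
  have hT' : ∀ (f : C(M, ℂ)) (x : M), TM f x = w x.1 * f (Φ x) := hTM
  -- depth property
  have Hdepth : ∀ U : Set M, IsOpen U → U.Nonempty →
      ∃ x ∈ U, ∃ m : ℕ, ∀ y, Φ^[m] y ≠ x := by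
    intro U hU ⟨x, hx⟩
    obtain ⟨V, hV, hUV⟩ := isOpen_induced_iff.mp hU
    have hxVM : (x : K) ∈ V ∩ M := ⟨by rw [← hUV] at hx; exact hx, x.2⟩
    have hne : ¬(V ∩ M ⊆ L) := by
      intro hsub
      have := hKey V hV hsub
      rw [this] at hxVM
      exact hxVM
    obtain ⟨k', hk'VM, hk'L⟩ := Set.not_subset.mp hne
    have hk'm : ∃ m : ℕ, k' ∉ φ^[m] '' Set.univ := by
      by_contra hc
      push_neg at hc
      exact hk'L (by rw [hL]; exact Set.mem_iInter.mpr hc)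
    obtain ⟨m, hm⟩ := hk'm
    refine ⟨⟨k', hk'VM.2⟩, ?_, m, ?_⟩
    · rw [← hUV]
      exact hk'VM.1
    · intro y hy
      apply hm
      refine ⟨(y : K), Set.mem_univ _, ?_⟩
      rw [← hcoe m y, hy]
  -- Φ is not surjective
  have hnsurj : ¬ Function.Surjective Φ := by
    intro hsurj
    obtain ⟨x, -, m, hm⟩ := Hdepth Set.univ isOpen_univ
      ⟨⟨hMne.choose, hMne.choose_spec⟩, Set.mem_univ _⟩
    obtain ⟨y, hy⟩ := (hsurj.iterate m) x
    exact hm y hy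
  -- 0 is in the spectrum
  have h0 : (0 : ℂ) ∈ spectrum ℂ TM :=
    wco_zero_mem Φ hΦc hnsurj (fun x => w x.1) TM hT'
  -- spectrum is inside the disk
  have hsub : ∀ z ∈ spectrum ℂ TM, (‖z‖₊ : ENNReal) ≤ spectralRadius ℂ TM := by
    intro z hz
    exact le_iSup₂ (f := fun k (_ : k ∈ spectrum ℂ TM) => (‖k‖₊ : ENNReal)) z hz
  rcases eq_or_ne (spectralRadius ℂ TM) 0 with hρ0 | hρ0
  · right
    apply Set.eq_singleton_iff_unique_mem.mpr
    refine ⟨h0, fun z hz => ?_⟩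
    have := hsub z hz
    rw [hρ0, nonpos_iff_eq_zero] at this
    simpa using this
  · left
    ext z
    simp only [Set.mem_setOf_eq]
    constructor
    · exact hsub z
    · intro hzle
      by_cases hz0 : z = 0
      · rw [hz0]; exact h0
      · rcases lt_or_eq_of_le hzle with hlt | heq
        · exact wco_core Φ hΦc hΦi (fun x => w x.1)
            ((map_continuous w).comp continuous_subtype_val) TM hT' Hdepth z hz0 hlt
        · -- boundary case: approximate from inside
          have hρfin : spectralRadius ℂ TM ≠ ⊤ := by rw [← heq]; exact ENNReal.coe_ne_top
          have hzpos : (0 : ℝ) < ‖z‖ := norm_pos_iff.mpr hz0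
          set c : ℕ → ℝ := fun n => 1 - 1 / (n + 2) with hc
          have hc0 : ∀ n, 0 < c n := by
            intro n
            have h1 : (1 : ℝ) / (n + 2) < 1 := by
              rw [div_lt_one (by positivity)]
              have := Nat.cast_nonneg (α := ℝ) n
              linarith
            simp only [hc]
            linarith
          have hc1 : ∀ n, c n < 1 := by
            intro n
            have h1 : (0 : ℝ) < 1 / (n + 2) := by positivity
            simp only [hc]
            linarith
          have hmem : ∀ n : ℕ, ((c n : ℂ) * z) ∈ spectrum ℂ TM := by
            intro n
            apply wco_core Φ hΦc hΦi (fun x => w x.1)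
              ((map_continuous w).comp continuous_subtype_val) TM hT' Hdepth
            · intro h
              rcases mul_eq_zero.mp h with h | h
              · have : c n = 0 := by exact_mod_cast h
                exact (ne_of_gt (hc0 n)) this
              · exact hz0 h
            · rw [← heq]
              have hlt : ‖(c n : ℂ) * z‖₊ < ‖z‖₊ := by
                rw [← NNReal.coe_lt_coe, coe_nnnorm, coe_nnnorm, norm_mul]
                have hcn : ‖(c n : ℂ)‖ = c n := by
                  rw [Complex.norm_real, Real.norm_eq_abs, abs_of_pos (hc0 n)]
                rw [hcn]
                nlinarith [hc1 n, hc0 n, hzpos]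
              exact_mod_cast hlt
          have htend : Tendsto (fun n : ℕ => (c n : ℂ) * z) atTop (𝓝 z) := by
            have h1 : Tendsto (fun n : ℕ => (1 : ℝ) / (n + 2)) atTop (𝓝 0) := by
              have := tendsto_one_div_add_atTop_nhds_zero_nat (𝕜 := ℝ)
              have h2 := this.comp (tendsto_add_atTop_nat 1)
              convert h2 using 2 with n
              simp
              push_cast
              ring
            have h2 : Tendsto c atTop (𝓝 1) := by
              have := h1.const_sub 1
              simpa [hc] using this
            have h3 : Tendsto (fun n : ℕ => (c n : ℂ)) atTop (𝓝 1) := by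
              have := (Complex.continuous_ofReal.tendsto 1).comp h2
              exact this
            have := h3.mul_const z
            simpa using this
          exact (spectrum.isClosed TM).mem_of_tendsto htend (Eventually.of_forall hmem)
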